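/- Suppose (X_n) is a sequence of {0,1}-valued random variables adapted to a filtration (F_n) such that P(X_{n+ℓ} = 1 | F_n) ≥ δ₀ > 0 for all n, for some fixed integer ℓ ≥ 1. Then almost surely liminf_{n→∞} (1/n) Σ_{k=1}^n X_k ≥ δ₀/ℓ. -/

import Mathlib

open Filter MeasureTheory Topology

theorem abel_id (a : ℕ → ℝ) (n : ℕ) :
    ∑ j ∈ Finset.range n, a j
      = (n:ℝ) * (∑ j ∈ Finset.range n, a j / ((j:ℝ)+1))
        - ∑ j ∈ Finset.range n, (∑ i ∈ Finset.range j, a i / ((i:ℝ)+1)) := by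
  induction n with
  | zero => simp
  | succ n ih =>
    rw [Finset.sum_range_succ, Finset.sum_range_succ, Finset.sum_range_succ (f := fun j => ∑ i ∈ Finset.range j, a i / ((i:ℝ)+1)), ih]
    have h : ((n:ℝ)+1) * (a n / ((n:ℝ)+1)) = a n := by
      field_simp
    push_cast
    nlinarith [h]

theorem my_kronecker (a : ℕ → ℝ) (L : ℝ)
    (h : Tendsto (fun n : ℕ => ∑ j ∈ Finset.range n, a j / ((j:ℝ)+1)) atTop (𝓝 L)) :
    Tendsto (fun n : ℕ => (1/(n:ℝ)) * ∑ j ∈ Finset.range n, a j) atTop (𝓝 0) := by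
  have hc := h.cesaro
  have hsub := h.sub hc
  rw [sub_self] at hsub
  apply hsub.congr'
  filter_upwards [eventually_ge_atTop 1] with n hn
  have hn0 : (n:ℝ) ≠ 0 := by positivity
  rw [abel_id a n]
  field_simp


theorem sum_inv_sq_le (n : ℕ) :
    ∑ j ∈ Finset.range n, (1/((j:ℝ)+1))^2 ≤ 2 - 1/(n:ℝ) := by
  induction n with
  | zero => simp
  | succ n ih =>
    rw [Finset.sum_range_succ]
    rcases Nat.eq_zero_or_pos n with h0 | h0
    · subst h0; norm_num
    have hn : (1:ℝ) ≤ (n:ℝ) := by exact_mod_cast h0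
    have h1 : (0:ℝ) < (n:ℝ) := by linarith
    have h2 : (0:ℝ) < (n:ℝ)+1 := by linarith
    have key : (1/((n:ℝ)+1))^2 ≤ 1/(n:ℝ) - 1/((n:ℝ)+1) := by
      rw [div_sub_div _ _ (ne_of_gt h1) (ne_of_gt h2)]
      rw [div_pow, one_pow, div_le_div_iff₀ (by positivity) (by positivity)]
      ring_nf
      nlinarith
    push_cast
    linarith

theorem slln_aux {Ω : Type*} {m : MeasurableSpace Ω} {μ : Measure Ω} [IsProbabilityMeasure μ]
    (𝒢 : Filtration ℕ m) (Z : ℕ → Ω → ℝ)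
    (hmeas : ∀ j, StronglyMeasurable[𝒢 (j+1)] (Z j))
    (hbdd : ∀ j, ∀ᵐ ω ∂μ, |Z j ω| ≤ 2)
    (hzero : ∀ j, μ[Z j | 𝒢 j] =ᵐ[μ] 0) :
    ∀ᵐ ω ∂μ, Tendsto (fun n : ℕ => (1/(n:ℝ)) * ∑ j ∈ Finset.range n, Z j ω) atTop (𝓝 0) := by
  have hint : ∀ {f : Ω → ℝ} (C : ℝ), AEStronglyMeasurable f μ → (∀ᵐ ω ∂μ, |f ω| ≤ C) →
      Integrable f μ :=
    fun {f} C hm hb => (integrable_const C).mono' hm (by simpa [Real.norm_eq_abs] using hb)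
  have hZsm : ∀ j, StronglyMeasurable (Z j) := fun j => (hmeas j).mono (𝒢.le _)
  have hZint : ∀ j, Integrable (Z j) μ := fun j => hint 2 (hZsm j).aestronglyMeasurable (hbdd j)
  set f : ℕ → Ω → ℝ := fun j ω => Z j ω / ((j:ℝ)+1) with hf
  have hfsm : ∀ j, StronglyMeasurable[𝒢 (j+1)] (f j) := fun j => ((hmeas j).measurable.div_const _).stronglyMeasurable
  have hfsm' : ∀ j, StronglyMeasurable (f j) := fun j => (hfsm j).mono (𝒢.le _)
  have hfb : ∀ j, ∀ᵐ ω ∂μ, |f j ω| ≤ 2 := by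
    intro j
    filter_upwards [hbdd j] with ω hω
    have h1 : (1:ℝ) ≤ (j:ℝ)+1 := by linarith [Nat.cast_nonneg (α:=ℝ) j]
    have : |f j ω| = |Z j ω| / ((j:ℝ)+1) := by
      rw [hf]; simp only; rw [abs_div, abs_of_pos (show (0:ℝ) < (j:ℝ)+1 by positivity)]
    rw [this]
    calc |Z j ω| / ((j:ℝ)+1) ≤ |Z j ω| / 1 := by
          apply div_le_div_of_nonneg_left (abs_nonneg _) one_pos h1
      _ ≤ 2 := by simpa using hω
  have hfint : ∀ j, Integrable (f j) μ := fun j => (hZint j).div_const _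
  have hfzero : ∀ j, μ[f j | 𝒢 j] =ᵐ[μ] 0 := by
    intro j
    have heq : f j = ((j:ℝ)+1)⁻¹ • Z j := by
      ext ω; simp [hf, div_eq_inv_mul]
    calc μ[f j | 𝒢 j] =ᵐ[μ] ((j:ℝ)+1)⁻¹ • μ[Z j | 𝒢 j] := by
          rw [heq]; exact condExp_smul _ _ _
      _ =ᵐ[μ] 0 := by
          filter_upwards [hzero j] with ω hω
          simp [hω]
  set M : ℕ → Ω → ℝ := fun n ω => ∑ j ∈ Finset.range n, f j ω with hM
  have hMadp : ∀ n, StronglyMeasurable[𝒢 n] (M n) := by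
    intro n
    have hMn : M n = ∑ j ∈ Finset.range n, f j := by
      ext ω; simp [hM, Finset.sum_apply]
    rw [hMn]
    exact Finset.stronglyMeasurable_sum _ fun j hj =>
      (hfsm j).mono (𝒢.mono (Finset.mem_range.1 hj))
  have hcondf : ∀ i k, i ≤ k → μ[f k | 𝒢 i] =ᵐ[μ] 0 := by
    intro i k hik
    calc μ[f k | 𝒢 i] =ᵐ[μ] μ[μ[f k | 𝒢 k] | 𝒢 i] :=
          (condExp_condExp_of_le (𝒢.mono hik) (𝒢.le k)).symm
      _ =ᵐ[μ] μ[(0 : Ω → ℝ) | 𝒢 i] := condExp_congr_ae (hfzero k)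
      _ =ᵐ[μ] 0 := by rw [condExp_zero]
  have hmart : Martingale M 𝒢 μ := by
    refine ⟨hMadp, fun i j hij => ?_⟩
    have hMj : M j = ∑ k ∈ Finset.range j, f k := by
      ext ω; simp [hM, Finset.sum_apply]
    have h1 : μ[M j | 𝒢 i] =ᵐ[μ] ∑ k ∈ Finset.range j, μ[f k | 𝒢 i] := by
      rw [hMj]; exact condExp_finset_sum (fun k _ => hfint k) _
    have h2 : ∀ k : ℕ, μ[f k | 𝒢 i] =ᵐ[μ] fun ω => if k < i then f k ω else 0 := by
      intro k
      by_cases hk : k < i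
      · have : μ[f k | 𝒢 i] = f k :=
          condExp_of_stronglyMeasurable (𝒢.le i) ((hfsm k).mono (𝒢.mono hk)) (hfint k)
        rw [this]
        filter_upwards with ω; simp [hk]
      · filter_upwards [hcondf i k (le_of_not_gt hk)] with ω hω
        simp only [hω, hk, if_false]
        simpa using hω
    filter_upwards [h1, ae_all_iff.2 h2] with ω hω1 hω2
    rw [hω1.trans (by rw [Finset.sum_apply])]
    calc ∑ k ∈ Finset.range j, (μ[f k | 𝒢 i]) ω
        = ∑ k ∈ Finset.range j, (if k < i then f k ω else 0) :=
          Finset.sum_congr rfl fun k _ => hω2 k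
      _ = ∑ k ∈ Finset.range i, (if k < i then f k ω else 0) :=
          (Finset.sum_subset (Finset.range_subset_range.2 hij) (fun k _ hk => by
            simp [Finset.mem_range] at hk
            simp [not_lt.2 hk, Nat.not_lt.1 (by simpa [Finset.mem_range] using hk)])).symm
      _ = M i ω := Finset.sum_congr rfl fun k hk => by
          simp [Finset.mem_range.1 hk]
  -- integrability of products
  have hmul_int : ∀ {g h : Ω → ℝ} {Cg Ch : ℝ}, StronglyMeasurable g → StronglyMeasurable h →
      (∀ᵐ ω ∂μ, |g ω| ≤ Cg) → (∀ᵐ ω ∂μ, |h ω| ≤ Ch) →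
      Integrable (fun ω => g ω * h ω) μ := by
    intro g h Cg Ch hg hh hbg hbh
    refine hint (Cg*Ch) (hg.mul hh).aestronglyMeasurable ?_
    filter_upwards [hbg, hbh] with ω h1 h2
    rw [abs_mul]
    exact mul_le_mul h1 h2 (abs_nonneg _) ((abs_nonneg _).trans h1)
  -- orthogonality
  have horth : ∀ i j, i < j → ∫ ω, Z i ω * Z j ω ∂μ = 0 := by
    intro i j hij
    have hZi : StronglyMeasurable[𝒢 j] (Z i) := (hmeas i).mono (𝒢.mono hij)
    have hZZ : Integrable (Z i * Z j) μ := hmul_int (hZsm i) (hZsm j) (hbdd i) (hbdd j)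
    have hpull := condExp_mul_of_stronglyMeasurable_left hZi hZZ (hZint j)
    have h0 : (Z i * μ[Z j | 𝒢 j] : Ω → ℝ) =ᵐ[μ] 0 := by
      filter_upwards [hzero j] with ω hω
      simp only [Pi.mul_apply, Pi.zero_apply] at hω ⊢
      rw [hω, mul_zero]
    calc ∫ ω, Z i ω * Z j ω ∂μ = ∫ ω, (μ[Z i * Z j | 𝒢 j]) ω ∂μ :=
          (integral_condExp (𝒢.le j)).symm
      _ = 0 := by rw [integral_congr_ae (hpull.trans h0)]; simp
  have hMb : ∀ n, ∀ᵐ ω ∂μ, |M n ω| ≤ 2*n := by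
    intro n
    filter_upwards [ae_all_iff.2 hfb] with ω hω
    calc |M n ω| ≤ ∑ j ∈ Finset.range n, |f j ω| := Finset.abs_sum_le_sum_abs _ _
      _ ≤ ∑ j ∈ Finset.range n, 2 := Finset.sum_le_sum fun j _ => hω j
      _ = 2*n := by simp [mul_comm]
  have hMsm : ∀ n, StronglyMeasurable (M n) := fun n => (hMadp n).mono (𝒢.le n)
  have hMint : ∀ n, Integrable (M n) μ := fun n =>
    hint (2*n) (hMsm n).aestronglyMeasurable (hMb n)
  have iMM : ∀ n, Integrable (fun ω => M n ω * M n ω) μ := fun n =>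
    hmul_int (hMsm n) (hMsm n) (hMb n) (hMb n)
  -- cross terms vanish
  have hcross : ∀ n, ∫ ω, M n ω * f n ω ∂μ = 0 := by
    intro n
    have h1 : ∀ ω, M n ω * f n ω = ∑ i ∈ Finset.range n, f i ω * f n ω := by
      intro ω; rw [hM]; simp only; rw [Finset.sum_mul]
    have h2 : ∀ i : ℕ, Integrable (fun ω => f i ω * f n ω) μ := fun i =>
      hmul_int (hfsm' i) (hfsm' n) (hfb i) (hfb n)
    calc ∫ ω, M n ω * f n ω ∂μ = ∫ ω, ∑ i ∈ Finset.range n, f i ω * f n ω ∂μ := by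
          simp_rw [h1]
      _ = ∑ i ∈ Finset.range n, ∫ ω, f i ω * f n ω ∂μ :=
          integral_finset_sum _ fun i _ => h2 i
      _ = 0 := by
          refine Finset.sum_eq_zero fun i hi => ?_
          have he : ∀ ω, f i ω * f n ω = (1/(((i:ℝ)+1)*((n:ℝ)+1))) * (Z i ω * Z n ω) := by
            intro ω; rw [hf]; simp only; field_simp
          simp_rw [he]
          rw [integral_const_mul, horth i n (Finset.mem_range.1 hi), mul_zero]
  -- second moments of increments
  have hsq : ∀ j, ∫ ω, f j ω * f j ω ∂μ ≤ 4 * (1/((j:ℝ)+1))^2 := by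
    intro j
    have hd : (0:ℝ) < (j:ℝ)+1 := by positivity
    have i2 : Integrable (fun ω => f j ω * f j ω) μ :=
      hmul_int (hfsm' j) (hfsm' j) (hfb j) (hfb j)
    have hle : ∀ᵐ ω ∂μ, f j ω * f j ω ≤ 4 * (1/((j:ℝ)+1))^2 := by
      filter_upwards [hbdd j] with ω hω
      have habs : |f j ω| ≤ 2/((j:ℝ)+1) := by
        have : |f j ω| = |Z j ω| / ((j:ℝ)+1) := by
          rw [hf]; simp only; rw [abs_div, abs_of_pos hd]
        rw [this, div_le_div_iff_of_pos_right hd]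
        exact hω
      calc f j ω * f j ω = |f j ω| * |f j ω| := (abs_mul_abs_self _).symm
        _ ≤ (2/((j:ℝ)+1)) * (2/((j:ℝ)+1)) :=
            mul_le_mul habs habs (abs_nonneg _) (by positivity)
        _ = 4 * (1/((j:ℝ)+1))^2 := by ring
    calc ∫ ω, f j ω * f j ω ∂μ ≤ ∫ _ω, 4 * (1/((j:ℝ)+1))^2 ∂μ :=
          integral_mono_ae i2 (integrable_const _) hle
      _ = 4 * (1/((j:ℝ)+1))^2 := by simp
  -- second moment bound on M
  have hM2 : ∀ n, ∫ ω, M n ω * M n ω ∂μ ≤ ∑ j ∈ Finset.range n, 4 * (1/((j:ℝ)+1))^2 := by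
    intro n
    induction n with
    | zero => simp [hM]
    | succ n ih =>
      have hMf : ∀ ω, M (n+1) ω = M n ω + f n ω := by
        intro ω; rw [hM]; simp only; rw [Finset.sum_range_succ]
      have e1 : ∀ ω, M (n+1) ω * M (n+1) ω
          = M n ω * M n ω + (2*(M n ω * f n ω) + f n ω * f n ω) := by
        intro ω; rw [hMf]; ring
      have iMf : Integrable (fun ω => M n ω * f n ω) μ :=
        hmul_int (hMsm n) (hfsm' n) (hMb n) (hfb n)
      have iff' : Integrable (fun ω => f n ω * f n ω) μ :=
        hmul_int (hfsm' n) (hfsm' n) (hfb n) (hfb n)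
      have iB : Integrable (fun ω => 2*(M n ω * f n ω)) μ := iMf.const_mul 2
      have iBC : Integrable (fun ω => 2*(M n ω * f n ω) + f n ω * f n ω) μ := iB.add iff'
      calc ∫ ω, M (n+1) ω * M (n+1) ω ∂μ
          = ∫ ω, (M n ω * M n ω + (2*(M n ω * f n ω) + f n ω * f n ω)) ∂μ := by
            simp_rw [e1]
        _ = (∫ ω, M n ω * M n ω ∂μ)
              + ((∫ ω, 2*(M n ω * f n ω) ∂μ) + ∫ ω, f n ω * f n ω ∂μ) := by
            rw [integral_add (iMM n) iBC, integral_add iB iff']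
        _ ≤ (∑ j ∈ Finset.range n, 4 * (1/((j:ℝ)+1))^2) + (0 + 4 * (1/((n:ℝ)+1))^2) := by
            have : ∫ ω, 2*(M n ω * f n ω) ∂μ = 0 := by
              rw [integral_const_mul, hcross n, mul_zero]
            rw [this]
            exact add_le_add ih (add_le_add le_rfl (hsq n))
        _ = ∑ j ∈ Finset.range (n+1), 4 * (1/((j:ℝ)+1))^2 := by
            rw [Finset.sum_range_succ]; ring
  -- L¹ bound
  have hL1 : ∀ n, eLpNorm (M n) 1 μ ≤ ((5:NNReal) : ENNReal) := by
    intro n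
    have h8 : ∫ ω, M n ω * M n ω ∂μ ≤ 8 := by
      refine (hM2 n).trans ?_
      have h1 := sum_inv_sq_le n
      have h4 : ∑ j ∈ Finset.range n, 4 * (1/((j:ℝ)+1))^2
          = 4 * ∑ j ∈ Finset.range n, (1/((j:ℝ)+1))^2 := by rw [Finset.mul_sum]
      have h5 : (0:ℝ) ≤ 1/(n:ℝ) := by positivity
      rw [h4]; linarith
    have habs : ∫ ω, |M n ω| ∂μ ≤ 5 := by
      have hptw : ∀ ω, |M n ω| ≤ (1 + M n ω * M n ω)/2 := by
        intro ω
        nlinarith [sq_nonneg (|M n ω| - 1), abs_mul_abs_self (M n ω)]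
      have iabs : Integrable (fun ω => |M n ω|) μ := (hMint n).abs
      have iq : Integrable (fun ω => (1 + M n ω * M n ω)/2) μ :=
        ((integrable_const 1).add (iMM n)).div_const 2
      calc ∫ ω, |M n ω| ∂μ ≤ ∫ ω, (1 + M n ω * M n ω)/2 ∂μ := integral_mono iabs iq hptw
        _ = (1 + ∫ ω, M n ω * M n ω ∂μ)/2 := by
            rw [integral_div, integral_add (integrable_const 1) (iMM n)]
            simp
        _ ≤ 5 := by linarith
    rw [eLpNorm_one_eq_lintegral_enorm, ← ofReal_integral_norm_eq_lintegral_enorm (hMint n)]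
    simp_rw [Real.norm_eq_abs]
    calc ENNReal.ofReal (∫ ω, |M n ω| ∂μ) ≤ ENNReal.ofReal 5 := ENNReal.ofReal_le_ofReal habs
      _ = ((5:NNReal) : ENNReal) := by norm_num
  have hconv := hmart.submartingale.ae_tendsto_limitProcess hL1
  filter_upwards [hconv] with ω hω
  exact my_kronecker (fun j => Z j ω) _ hω

theorem stmt_3 {Ω : Type*} {m : MeasurableSpace Ω} {μ : Measure Ω}
    [IsProbabilityMeasure μ] (ℱ : Filtration ℕ m) (X : ℕ → Ω → ℝ)
    (ℓ : ℕ) (hℓ : 1 ≤ ℓ) (δ₀ : ℝ) (hδ₀ : 0 < δ₀) (hδ₀le : δ₀ ≤ 1)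
    (hadapted : ∀ n, StronglyMeasurable[ℱ n] (X n))
    (h01 : ∀ n ω, X n ω = 0 ∨ X n ω = 1)
    (hcond : ∀ n, ∀ᵐ ω ∂μ, δ₀ ≤ (μ[X (n + ℓ)|ℱ n]) ω) :
    ∀ᵐ ω ∂μ, δ₀ / ℓ ≤
      liminf (fun n : ℕ => (1 / (n : ℝ)) * ∑ k ∈ Finset.range n, X (k + 1) ω) atTop := by
  have hX01 : ∀ n ω, 0 ≤ X n ω ∧ X n ω ≤ 1 := by
    intro n ω; rcases h01 n ω with h | h <;> rw [h] <;> norm_num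
  have hXsm : ∀ n, StronglyMeasurable (X n) := fun n => (hadapted n).mono (ℱ.le n)
  have hXint : ∀ n, Integrable (X n) μ := by
    intro n
    refine (integrable_const (1:ℝ)).mono' (hXsm n).aestronglyMeasurable ?_
    filter_upwards with ω
    rw [Real.norm_eq_abs, abs_le]
    constructor <;> linarith [(hX01 n ω).1, (hX01 n ω).2]
  set 𝒢 : Filtration ℕ m :=
    ⟨fun j => ℱ (j*ℓ), fun i j hij => ℱ.mono (Nat.mul_le_mul_right ℓ hij), fun j => ℱ.le _⟩
    with h𝒢
  set C : ℕ → Ω → ℝ := fun j => μ[X ((j+1)*ℓ) | ℱ (j*ℓ)] with hC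
  set Z : ℕ → Ω → ℝ := fun j => X ((j+1)*ℓ) - C j with hZ
  have hCsm : ∀ j, StronglyMeasurable[ℱ (j*ℓ)] (C j) := fun j => stronglyMeasurable_condExp
  have hCb : ∀ j, ∀ᵐ ω ∂μ, 0 ≤ C j ω ∧ C j ω ≤ 1 := by
    intro j
    have h1 : 0 ≤ᵐ[μ] C j := condExp_nonneg (Filter.Eventually.of_forall fun ω => (hX01 _ ω).1)
    have h2 : C j ≤ᵐ[μ] μ[(fun _ => (1:ℝ)) | ℱ (j*ℓ)] :=
      condExp_mono (hXint _) (integrable_const 1)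
        (Filter.Eventually.of_forall fun ω => (hX01 _ ω).2)
    filter_upwards [h1, h2] with ω hω1 hω2
    refine ⟨hω1, hω2.trans ?_⟩
    rw [condExp_const (ℱ.le _)]
  have hmeasZ : ∀ j, StronglyMeasurable[𝒢 (j+1)] (Z j) := by
    intro j
    exact (hadapted ((j+1)*ℓ)).sub ((hCsm j).mono (ℱ.mono (Nat.mul_le_mul_right ℓ (Nat.le_succ j))))
  have hbddZ : ∀ j, ∀ᵐ ω ∂μ, |Z j ω| ≤ 2 := by
    intro j
    filter_upwards [hCb j] with ω hω
    rw [hZ]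
    simp only [Pi.sub_apply]
    rw [abs_le]
    constructor <;> linarith [(hX01 ((j+1)*ℓ) ω).1, (hX01 ((j+1)*ℓ) ω).2, hω.1, hω.2]
  have hzeroZ : ∀ j, μ[Z j | 𝒢 j] =ᵐ[μ] 0 := by
    intro j
    have h1 : μ[Z j | 𝒢 j] =ᵐ[μ] μ[X ((j+1)*ℓ) | 𝒢 j] - μ[C j | 𝒢 j] :=
      condExp_sub (hXint _) integrable_condExp _
    have h2 : μ[C j | 𝒢 j] = C j :=
      condExp_of_stronglyMeasurable (ℱ.le _) stronglyMeasurable_condExp integrable_condExp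
    filter_upwards [h1] with ω hω
    rw [Pi.zero_apply, hω, Pi.sub_apply, h2]
    simp [hC]
    exact sub_self _
  have hslln := slln_aux 𝒢 Z hmeasZ hbddZ hzeroZ
  have hcond' : ∀ j, ∀ᵐ ω ∂μ, δ₀ ≤ C j ω := by
    intro j
    have := hcond (j*ℓ)
    have he : (j+1)*ℓ = j*ℓ + ℓ := by ring
    rw [hC]
    simp only [he]
    exact this
  -- deterministic limit facts
  have hlp : 0 < ℓ := hℓ
  have hlR : (1:ℝ) ≤ (ℓ:ℝ) := by exact_mod_cast hℓ
  have hlRp : (0:ℝ) < (ℓ:ℝ) := by linarith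
  have hmdiv : Tendsto (fun n : ℕ => n / ℓ) atTop atTop := by
    refine Filter.tendsto_atTop_atTop.2 fun b => ⟨b*ℓ, fun n hn => ?_⟩
    exact (Nat.le_div_iff_mul_le hlp).2 hn
  have hratio : Tendsto (fun n : ℕ => ((n/ℓ : ℕ):ℝ)/(n:ℝ)) atTop (𝓝 (1/(ℓ:ℝ))) := by
    have hlow : Tendsto (fun n : ℕ => 1/(ℓ:ℝ) - 1/(n:ℝ)) atTop (𝓝 (1/(ℓ:ℝ))) := by
      have := tendsto_one_div_atTop_nhds_zero_nat (𝕜 := ℝ)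
      have h2 := (tendsto_const_nhds (x := 1/(ℓ:ℝ)) (f := atTop)).sub this
      simpa using h2
    refine tendsto_of_tendsto_of_tendsto_of_le_of_le' hlow tendsto_const_nhds ?_ ?_
    · filter_upwards [eventually_ge_atTop 1] with n hn
      have hnR : (1:ℝ) ≤ (n:ℝ) := by exact_mod_cast hn
      have hnp : (0:ℝ) < (n:ℝ) := by linarith
      have heq : (ℓ:ℝ) * ((n/ℓ:ℕ):ℝ) + ((n%ℓ:ℕ):ℝ) = (n:ℝ) := by
        exact_mod_cast Nat.div_add_mod n ℓ
      have hmod : ((n%ℓ:ℕ):ℝ) < (ℓ:ℝ) := by exact_mod_cast Nat.mod_lt n hlp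
      rw [div_sub_div _ _ (ne_of_gt hlRp) (ne_of_gt hnp), div_le_div_iff₀ (by positivity) hnp]
      nlinarith [Nat.cast_nonneg (α := ℝ) (n/ℓ)]
    · filter_upwards [eventually_ge_atTop 1] with n hn
      have hnR : (1:ℝ) ≤ (n:ℝ) := by exact_mod_cast hn
      have hnp : (0:ℝ) < (n:ℝ) := by linarith
      have heq : (ℓ:ℝ) * ((n/ℓ:ℕ):ℝ) + ((n%ℓ:ℕ):ℝ) = (n:ℝ) := by
        exact_mod_cast Nat.div_add_mod n ℓ
      have hmod0 : (0:ℝ) ≤ ((n%ℓ:ℕ):ℝ) := Nat.cast_nonneg _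
      rw [div_le_div_iff₀ hnp hlRp]
      nlinarith
  filter_upwards [hslln, ae_all_iff.2 hcond'] with ω hω hδ
  set g : ℕ → ℝ := fun n =>
    ((n/ℓ : ℕ):ℝ)/(n:ℝ) * (δ₀ + (1/((n/ℓ:ℕ):ℝ)) * ∑ j ∈ Finset.range (n/ℓ), Z j ω) with hg
  have hglim : Tendsto g atTop (𝓝 (δ₀ / ℓ)) := by
    have h1 : Tendsto (fun n : ℕ => δ₀ + (1/((n/ℓ:ℕ):ℝ)) * ∑ j ∈ Finset.range (n/ℓ), Z j ω)
        atTop (𝓝 (δ₀ + 0)) := tendsto_const_nhds.add (hω.comp hmdiv)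
    have h2 := hratio.mul h1
    have : 1/(ℓ:ℝ) * (δ₀ + 0) = δ₀ / ℓ := by ring
    rw [this] at h2
    exact h2
  have hle : ∀ᶠ n in atTop, g n ≤ (1/(n:ℝ)) * ∑ k ∈ Finset.range n, X (k+1) ω := by
    filter_upwards [eventually_ge_atTop ℓ] with n hn
    set mm : ℕ := n / ℓ with hmm
    have hm1 : 1 ≤ mm := (Nat.one_le_div_iff hlp).2 hn
    have hn1 : 1 ≤ n := le_trans hℓ hn
    have hmR : (1:ℝ) ≤ (mm:ℝ) := by exact_mod_cast hm1
    have hnR : (1:ℝ) ≤ (n:ℝ) := by exact_mod_cast hn1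
    have hmp : (0:ℝ) < (mm:ℝ) := by linarith
    have hnp : (0:ℝ) < (n:ℝ) := by linarith
    -- sum over subsequence is at most full sum
    have hsub : ∑ j ∈ Finset.range mm, X ((j+1)*ℓ) ω ≤ ∑ k ∈ Finset.range n, X (k+1) ω := by
      have hinj : ∀ a ∈ Finset.range mm, ∀ b ∈ Finset.range mm,
          (a+1)*ℓ - 1 = (b+1)*ℓ - 1 → a = b := by
        intro a _ b _ hab
        have ha1 : 1 ≤ (a+1)*ℓ := Nat.one_le_iff_ne_zero.2 (by positivity)
        have hb1 : 1 ≤ (b+1)*ℓ := Nat.one_le_iff_ne_zero.2 (by positivity)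
        have : (a+1)*ℓ = (b+1)*ℓ := by omega
        have := Nat.eq_of_mul_eq_mul_right hlp this
        omega
      have himg : (Finset.range mm).image (fun j => (j+1)*ℓ - 1) ⊆ Finset.range n := by
        intro k hk
        simp only [Finset.mem_image, Finset.mem_range] at hk ⊢
        obtain ⟨j, hj, rfl⟩ := hk
        have h1 : (j+1)*ℓ ≤ mm * ℓ := Nat.mul_le_mul_right ℓ hj
        have h2 : mm * ℓ ≤ n := Nat.div_mul_le_self n ℓ
        have h3 : 1 ≤ (j+1)*ℓ := Nat.one_le_iff_ne_zero.2 (by positivity)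
        omega
      calc ∑ j ∈ Finset.range mm, X ((j+1)*ℓ) ω
          = ∑ k ∈ (Finset.range mm).image (fun j => (j+1)*ℓ - 1), X (k+1) ω := by
            rw [Finset.sum_image hinj]
            refine Finset.sum_congr rfl fun j _ => ?_
            congr 1
            have h3 : 1 ≤ (j+1)*ℓ := Nat.one_le_iff_ne_zero.2 (by positivity)
            omega
        _ ≤ ∑ k ∈ Finset.range n, X (k+1) ω :=
            Finset.sum_le_sum_of_subset_of_nonneg himg fun k _ _ => (hX01 (k+1) ω).1
    have hdecomp : ∑ j ∈ Finset.range mm, X ((j+1)*ℓ) ω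
        = ∑ j ∈ Finset.range mm, C j ω + ∑ j ∈ Finset.range mm, Z j ω := by
      rw [← Finset.sum_add_distrib]
      refine Finset.sum_congr rfl fun j _ => ?_
      rw [hZ]; simp
    have hCsum : (mm:ℝ) * δ₀ ≤ ∑ j ∈ Finset.range mm, C j ω := by
      calc (mm:ℝ) * δ₀ = ∑ _j ∈ Finset.range mm, δ₀ := by
            rw [Finset.sum_const, Finset.card_range]; ring
        _ ≤ ∑ j ∈ Finset.range mm, C j ω := Finset.sum_le_sum fun j _ => hδ j
    have hgeq : g n = ((mm:ℝ) * δ₀ + ∑ j ∈ Finset.range mm, Z j ω)/(n:ℝ) := by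
      rw [hg]
      simp only [← hmm]
      field_simp
    rw [hgeq, one_div, inv_mul_eq_div]
    rw [div_le_div_iff₀ hnp hnp]
    have : (mm:ℝ) * δ₀ + ∑ j ∈ Finset.range mm, Z j ω ≤ ∑ k ∈ Finset.range n, X (k+1) ω := by
      calc (mm:ℝ) * δ₀ + ∑ j ∈ Finset.range mm, Z j ω
          ≤ ∑ j ∈ Finset.range mm, C j ω + ∑ j ∈ Finset.range mm, Z j ω := by linarith
        _ = ∑ j ∈ Finset.range mm, X ((j+1)*ℓ) ω := hdecomp.symm
        _ ≤ ∑ k ∈ Finset.range n, X (k+1) ω := hsub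
    nlinarith
  have hbound : Filter.IsBoundedUnder (· ≤ ·) atTop
      (fun n : ℕ => (1/(n:ℝ)) * ∑ k ∈ Finset.range n, X (k+1) ω) := by
    refine ⟨1, ?_⟩
    simp only [Filter.eventually_map]
    filter_upwards with n
    rcases Nat.eq_zero_or_pos n with h0 | h0
    · subst h0; simp
    have hnp : (0:ℝ) < (n:ℝ) := by exact_mod_cast h0
    have hsum : ∑ k ∈ Finset.range n, X (k+1) ω ≤ (n:ℝ) := by
      calc ∑ k ∈ Finset.range n, X (k+1) ω ≤ ∑ _k ∈ Finset.range n, (1:ℝ) :=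
            Finset.sum_le_sum fun k _ => (hX01 (k+1) ω).2
        _ = (n:ℝ) := by simp
    rw [one_div, inv_mul_eq_div, div_le_one hnp]
    exact hsum
  calc δ₀ / ℓ = liminf g atTop := (hglim.liminf_eq).symm
    _ ≤ liminf (fun n : ℕ => (1/(n:ℝ)) * ∑ k ∈ Finset.range n, X (k+1) ω) atTop :=
        liminf_le_liminf hle hglim.isBoundedUnder_ge hbound.isCoboundedUnder_ge
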